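/- Let (g_ι)_{ι<α} be a non-empty ordinal-indexed sequence of total canonical term graphs over a signature Σ (all arities finite), and let liminf_{ι→α} g_ι be its limit inferior in the complete semilattice of canonical partial term graphs ordered by ≤⊥r. If liminf_{ι→α} g_ι is a total term graph, then (g_ι)_{ι<α} converges in the metric space of total canonical term graphs with the rigid distance d†, and liminf_{ι→α} g_ι = lim_{ι→α} g_ι. -/

import Mathlib

set_option autoImplicit false

namespace TGR

/-- A signature: a type of symbols, each with a finite arity. -/
structure Signature where
  Sym : Type
  ar : Sym → ℕ

/-- The signature `Σ_⊥`: `Σ` extended by a fresh nullary symbol `⊥` (here `none`). -/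
def Signature.bot (S : Signature) : Signature where
  Sym := Option S.Sym
  ar := fun o => match o with
    | none => 0
    | some f => S.ar f

/-- A rooted graph over a signature `S` with nodes `N`: a labelling, a successor
function respecting arities, and a root node. -/
structure TermGraph (S : Signature) (N : Type) where
  lab : N → S.Sym
  suc : (n : N) → Fin (S.ar (lab n)) → N
  root : N

namespace TermGraph

variable {S : Signature} {N M K : Type}

/-- `g.IsPos π n`: `π` is a position (path of successor indices from the root) of node `n`. -/
inductive IsPos (g : TermGraph S N) : List ℕ → N → Prop
  | root : IsPos g [] g.root
  | step {π : List ℕ} {n : N} (h : IsPos g π n) (i : Fin (S.ar (g.lab n))) :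
      IsPos g (π ++ [(i : ℕ)]) (g.suc n i)

/-- All nodes are reachable from the root. -/
def Reachable (g : TermGraph S N) : Prop :=
  ∀ n : N, ∃ π : List ℕ, g.IsPos π n

/-- The set of positions of `g`. -/
def pos (g : TermGraph S N) : Set (List ℕ) :=
  {π | ∃ n : N, g.IsPos π n}

/-- The set of positions of node `n` in `g`. -/
def nodePos (g : TermGraph S N) (n : N) : Set (List ℕ) :=
  {π | g.IsPos π n}

/-- `π ∼_g π'`: `π` and `π'` are positions of the same node. -/
def Aliases (g : TermGraph S N) (π π' : List ℕ) : Prop :=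
  ∃ n : N, g.IsPos π n ∧ g.IsPos π' n

/-- A position is acyclic if it passes no node twice. -/
def IsAcyclicPos (g : TermGraph S N) (π : List ℕ) : Prop :=
  ∀ (π₁ π₂ : List ℕ) (n : N), π₁ <+: π₂ → π₂ <+: π →
    g.IsPos π₁ n → g.IsPos π₂ n → π₁ = π₂

/-- The set of acyclic positions of node `n` in `g`. -/
def nodePosAcy (g : TermGraph S N) (n : N) : Set (List ℕ) :=
  {π | g.IsPos π n ∧ g.IsAcyclicPos π}

/-- The set of acyclic positions of `g`. -/
def posAcy (g : TermGraph S N) : Set (List ℕ) :=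
  {π | (∃ n : N, g.IsPos π n) ∧ g.IsAcyclicPos π}

/-- The depth of a node: the minimal length of its positions. -/
noncomputable def depth (g : TermGraph S N) (n : N) : ℕ :=
  sInf {k : ℕ | ∃ π : List ℕ, g.IsPos π n ∧ π.length = k}

open Classical in
/-- The (unique) node at a position. -/
noncomputable def nodeAt (g : TermGraph S N) (π : List ℕ) : N :=
  if h : ∃ n : N, g.IsPos π n then h.choose else g.root

/-- The label `g(π)` at a position. -/
noncomputable def labAt (g : TermGraph S N) (π : List ℕ) : S.Sym :=
  g.lab (g.nodeAt π)

/-- `Δ`-homomorphism: root, labelling and successor conditions, the latter two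
suspended on `Δ`-labelled nodes. -/
structure IsDHom (Δ : Set S.Sym) (g : TermGraph S N) (h : TermGraph S M)
    (φ : N → M) : Prop where
  root_eq : φ g.root = h.root
  lab_eq : ∀ n : N, g.lab n ∉ Δ → h.lab (φ n) = g.lab n
  suc_eq : ∀ n : N, g.lab n ∉ Δ → ∀ (i : ℕ) (hi : i < S.ar (g.lab n))
      (hi' : i < S.ar (h.lab (φ n))),
      φ (g.suc n ⟨i, hi⟩) = h.suc (φ n) ⟨i, hi'⟩

/-- Rigidity: `Pa_g(n) = Pa_h(φ n)` for all non-`Δ`-labelled nodes `n`. -/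
def IsRigid (Δ : Set S.Sym) (g : TermGraph S N) (h : TermGraph S M)
    (φ : N → M) : Prop :=
  ∀ n : N, g.lab n ∉ Δ → g.nodePosAcy n = h.nodePosAcy (φ n)

/-- Rigid `Δ`-homomorphism. -/
def IsRigidDHom (Δ : Set S.Sym) (g : TermGraph S N) (h : TermGraph S M)
    (φ : N → M) : Prop :=
  IsDHom Δ g h φ ∧ IsRigid Δ g h φ

/-- Isomorphism of term graphs: a homomorphism with an inverse homomorphism. -/
def Iso (g : TermGraph S N) (h : TermGraph S M) : Prop :=
  ∃ (φ : N → M) (ψ : M → N), IsDHom ∅ g h φ ∧ IsDHom ∅ h g ψ ∧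
    (∀ n : N, ψ (φ n) = n) ∧ (∀ m : M, φ (ψ m) = m)

/-- A partial term graph (over `Σ_⊥`) is total if no node is labelled `⊥`. -/
def Total (g : TermGraph S.bot N) : Prop := ∀ n : N, g.lab n ≠ none

/-- Rigid `⊥`-homomorphism between partial term graphs. -/
def IsRigidBotHom (g : TermGraph S.bot N) (h : TermGraph S.bot M)
    (φ : N → M) : Prop :=
  IsRigidDHom ({none} : Set (Option S.Sym)) g h φ

/-- The `⊥`-depth of a partial term graph: the minimal depth of a `⊥`-labelled
node, `ω` (`⊤`) if there is none. -/
noncomputable def botDepth (g : TermGraph S.bot N) : ℕ∞ :=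
  sInf {d : ℕ∞ | ∃ n : N, g.lab n = none ∧ (g.depth n : ℕ∞) = d}

/-- `m` is an acyclic predecessor of `n`: some acyclic position `π ++ [i]` of `n`
has `π` a position of `m`. -/
def acyPred (g : TermGraph S N) (n : N) : Set N :=
  {m | ∃ (π : List ℕ) (i : ℕ), (π ++ [i]) ∈ g.nodePosAcy n ∧ g.IsPos π m}

/-- Retained nodes of the truncation at depth `d`: the least set of nodes
containing all nodes of depth `< d` and closed under acyclic predecessors. -/
inductive Retained (g : TermGraph S N) (d : ℕ) : N → Prop
  | shallow {n : N} : g.depth n < d → Retained g d n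
  | pred {n m : N} : Retained g d n → m ∈ g.acyPred n → Retained g d m

theorem not_retained_zero {g : TermGraph S N} (n : N) : ¬ g.Retained 0 n := by
  intro h
  induction h with
  | shallow hd => exact Nat.not_lt_zero _ hd
  | pred _ _ ih => exact ih

/-- Fringe nodes of the truncation at depth `d` (a pair `(n, i)` stands for the
fresh node `n^i`); at depth `0` the fringe is just (a copy of) the root. -/
def IsFringe (g : TermGraph S.bot N) (d : ℕ) (p : N × ℕ) : Prop :=
  if d = 0 then p = (g.root, 0)
  else g.Retained d p.1 ∧ ∃ h : p.2 < S.bot.ar (g.lab p.1),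
    (¬ g.Retained d (g.suc p.1 ⟨p.2, h⟩) ∨
      (d - 1 ≤ g.depth p.1 ∧ p.1 ∉ g.acyPred (g.suc p.1 ⟨p.2, h⟩)))

/-- The node set of the rigid truncation: retained nodes plus fringe nodes. -/
def TNode (g : TermGraph S.bot N) (d : ℕ) : Type :=
  {x : N ⊕ (N × ℕ) // Sum.elim (g.Retained d) (g.IsFringe d) x}

def truncLab (g : TermGraph S.bot N) (d : ℕ) (x : TNode g d) : S.bot.Sym :=
  Sum.elim (fun n => g.lab n) (fun _ => none) x.1

open Classical in
noncomputable def truncSuc (g : TermGraph S.bot N) (d : ℕ) :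
    (x : TNode g d) → Fin (S.bot.ar (truncLab g d x)) → TNode g d
  | ⟨Sum.inl n, hn⟩ => fun i =>
      if hf : g.IsFringe d (n, (i : ℕ)) then ⟨Sum.inr (n, (i : ℕ)), hf⟩
      else
        ⟨Sum.inl (g.suc n ⟨(i : ℕ), i.isLt⟩), by
          show g.Retained d (g.suc n ⟨(i : ℕ), i.isLt⟩)
          rcases Nat.eq_zero_or_pos d with hd | hd
          · subst hd
            exact ((not_retained_zero n) hn).elim
          · by_contra hc
            apply hf
            show g.IsFringe d (n, (i : ℕ))
            unfold IsFringe
            rw [if_neg (Nat.pos_iff_ne_zero.mp hd)]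
            exact ⟨hn, i.isLt, Or.inl hc⟩⟩
  | ⟨Sum.inr p, hp⟩ => fun i => absurd i.isLt (Nat.not_lt_zero _)

noncomputable def truncRoot (g : TermGraph S.bot N) (d : ℕ) : TNode g d :=
  if hd : d = 0 then
    ⟨Sum.inr (g.root, 0), by
      subst hd
      show g.IsFringe 0 (g.root, 0)
      simp [IsFringe]⟩
  else
    ⟨Sum.inl g.root, by
      show g.Retained d g.root
      exact Retained.shallow (lt_of_le_of_lt
        (Nat.sInf_le ⟨[], IsPos.root, rfl⟩) (Nat.pos_of_ne_zero hd))⟩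

/-- The rigid truncation `g†d` of a partial term graph at finite depth `d`. -/
noncomputable def trunc (g : TermGraph S.bot N) (d : ℕ) :
    TermGraph S.bot (TNode g d) where
  lab := truncLab g d
  suc := truncSuc g d
  root := truncRoot g d

end TermGraph

/-- A canonical term graph: a term graph whose nodes are sets of positions,
each node being exactly its set of positions, with all nodes reachable. -/
structure CTG (S : Signature) where
  nodes : Set (Set (List ℕ))
  tg : TermGraph S ↥nodes
  reach : tg.Reachable
  canon : ∀ n : ↥nodes, (n : Set (List ℕ)) = tg.nodePos n

namespace CTG

variable {S : Signature}

def pos (g : CTG S) : Set (List ℕ) := g.tg.pos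
def Aliases (g : CTG S) : List ℕ → List ℕ → Prop := g.tg.Aliases
def posAcy (g : CTG S) : Set (List ℕ) := g.tg.posAcy
noncomputable def labAt (g : CTG S) : List ℕ → S.Sym := g.tg.labAt

/-- A canonical partial term graph is total if it has no `⊥`-labelled node. -/
def Total (g : CTG S.bot) : Prop := g.tg.Total

/-- The rigid partial order `g ≤⊥r h`: there is a rigid `⊥`-homomorphism
from `g` to `h`. -/
def LeR (g h : CTG S.bot) : Prop :=
  ∃ φ, TermGraph.IsRigidBotHom g.tg h.tg φ

noncomputable def botDepth (g : CTG S.bot) : ℕ∞ := g.tg.botDepth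

/-- `TruncIso g h d`: the rigid truncations of `g` and `h` at depth `d ≤ ω`
are isomorphic (`g†ω = g`). -/
def TruncIso {N M : Type} (g : TermGraph S.bot N) (h : TermGraph S.bot M)
    (d : ℕ∞) : Prop :=
  (d = ⊤ → TermGraph.Iso g h) ∧
  ∀ k : ℕ, d = (k : ℕ∞) → TermGraph.Iso (g.trunc k) (h.trunc k)

/-- The rigid similarity `sim†(g,h)`: the maximal `d ≤ ω` such that
`g†d ≅ h†d`. -/
noncomputable def simr (g h : CTG S.bot) : ℕ∞ :=
  sSup {d : ℕ∞ | TruncIso g.tg h.tg d}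

open Classical in
/-- The rigid distance `d†(g,h) = 2^{-sim†(g,h)}` (with `2^{-ω} = 0`). -/
noncomputable def rdist (g h : CTG S.bot) : ℝ :=
  if simr g h = ⊤ then 0 else (1 / 2 : ℝ) ^ (simr g h).toNat

def IsUB (A : Set (CTG S.bot)) (u : CTG S.bot) : Prop := ∀ g ∈ A, LeR g u

def IsLubR (A : Set (CTG S.bot)) (u : CTG S.bot) : Prop :=
  IsUB A u ∧ ∀ v, IsUB A v → LeR u v

def IsLB (A : Set (CTG S.bot)) (l : CTG S.bot) : Prop := ∀ g ∈ A, LeR l g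

def IsGlbR (A : Set (CTG S.bot)) (l : CTG S.bot) : Prop :=
  IsLB A l ∧ ∀ m, IsLB A m → LeR m l

/-- A directed set: non-empty and every two elements have an upper bound inside. -/
def DirectedR (A : Set (CTG S.bot)) : Prop :=
  A.Nonempty ∧ ∀ g ∈ A, ∀ h ∈ A, ∃ u ∈ A, LeR g u ∧ LeR h u

/-- `L` is the limit inferior `⨆_{β<α} ⨅_{β≤ι<α} f ι` of the ordinal-indexed
sequence `(f ι)_{ι<α}` in the rigid partial order. -/
def IsLiminfR (α : Ordinal.{0}) (f : Ordinal.{0} → CTG S.bot) (L : CTG S.bot) : Prop :=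
  ∃ inf : Ordinal.{0} → CTG S.bot,
    (∀ β < α, IsGlbR {g | ∃ ι, β ≤ ι ∧ ι < α ∧ g = f ι} (inf β)) ∧
    IsLubR {g | ∃ β < α, g = inf β} L

/-- Cauchy condition for an ordinal-indexed sequence w.r.t. the rigid distance. -/
def OrdCauchy (α : Ordinal.{0}) (f : Ordinal.{0} → CTG S.bot) : Prop :=
  ∀ ε : ℝ, 0 < ε → ∃ β < α, ∀ ι ι' : Ordinal.{0},
    β < ι → ι < ι' → ι' < α → rdist (f ι) (f ι') < ε

/-- Convergence of an ordinal-indexed sequence to `g` w.r.t. the rigid distance. -/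
def OrdTendsto (α : Ordinal.{0}) (f : Ordinal.{0} → CTG S.bot) (g : CTG S.bot) : Prop :=
  ∀ ε : ℝ, 0 < ε → ∃ β < α, ∀ ι : Ordinal.{0}, β < ι → ι < α → rdist (f ι) g < ε

/-- `u` is the unravelling of `g`: the term tree with the same positions and
labels as `g` and trivial aliasing. -/
def IsUnravelling (g u : CTG S) : Prop :=
  u.pos = g.pos ∧ (∀ π ∈ g.pos, u.labAt π = g.labAt π) ∧
  (∀ π π' : List ℕ, u.Aliases π π' ↔ (π ∈ g.pos ∧ π = π'))

end CTG

/-- A labelled quotient tree over a signature `S`. -/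
structure LQT (S : Signature) where
  P : Set (List ℕ)
  nonempty : P.Nonempty
  l : List ℕ → S.Sym
  rel : List ℕ → List ℕ → Prop
  rel_refl : ∀ π ∈ P, rel π π
  rel_symm : ∀ π π' : List ℕ, rel π π' → rel π' π
  rel_trans : ∀ π π' π'' : List ℕ, rel π π' → rel π' π'' → rel π π''
  rel_mem : ∀ π π' : List ℕ, rel π π' → π ∈ P ∧ π' ∈ P
  reach_mem : ∀ (π : List ℕ) (i : ℕ), π ++ [i] ∈ P → π ∈ P
  reach_ar : ∀ (π : List ℕ) (i : ℕ), π ++ [i] ∈ P → i < S.ar (l π)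
  congr_lab : ∀ π π' : List ℕ, rel π π' → l π = l π'
  congr_suc : ∀ (π π' : List ℕ) (i : ℕ), rel π π' → i < S.ar (l π) →
    rel (π ++ [i]) (π' ++ [i])

end TGR

namespace TGR

namespace TermGraph

variable {S : Signature} {N M K : Type}

theorem suc_congr (g : TermGraph S N) {a b : N} (e : a = b) {i : ℕ}
    (hi : i < S.ar (g.lab a)) (hib : i < S.ar (g.lab b)) :
    g.suc a ⟨i, hi⟩ = g.suc b ⟨i, hib⟩ := by subst e; rfl

theorem IsPos.cases_concat {g : TermGraph S N} {π : List ℕ} {n : N}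
    (h : g.IsPos π n) :
    (π = [] ∧ n = g.root) ∨
    ∃ (ρ : List ℕ) (m : N), ∃ (hm : g.IsPos ρ m) (i : Fin (S.ar (g.lab m))),
      π = ρ ++ [(i : ℕ)] ∧ n = g.suc m i := by
  cases h with
  | root => exact Or.inl ⟨rfl, rfl⟩
  | step hm i => exact Or.inr ⟨_, _, hm, i, rfl, rfl⟩

theorem isPos_nil {g : TermGraph S N} {n : N} (h : g.IsPos [] n) : n = g.root := by
  rcases h.cases_concat with ⟨_, rfl⟩ | ⟨ρ, m, hm, i, hπ, _⟩
  · rfl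
  · exact absurd hπ (by simp)

theorem isPos_concat {g : TermGraph S N} {π : List ℕ} {i : ℕ} {n : N}
    (h : g.IsPos (π ++ [i]) n) :
    ∃ (m : N), ∃ (hm : g.IsPos π m) (hi : i < S.ar (g.lab m)),
      n = g.suc m ⟨i, hi⟩ := by
  rcases h.cases_concat with ⟨habs, _⟩ | ⟨ρ, m, hm, j, hπ, hn⟩
  · exact absurd habs (by simp)
  · obtain ⟨rfl, hj⟩ := List.append_inj' hπ.symm rfl
    have hj' : (j : ℕ) = i := by simpa using hj
    subst hj'
    exact ⟨m, hm, j.isLt, by simpa using hn⟩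

theorem isPos_func {g : TermGraph S N} {π : List ℕ} {n : N} (h : g.IsPos π n) :
    ∀ {n' : N}, g.IsPos π n' → n = n' := by
  induction h with
  | root => intro n' h'; exact (isPos_nil h').symm
  | step hm i ih =>
    intro n' h'
    obtain ⟨m', hm', hi', rfl⟩ := isPos_concat h'
    have e : _ = m' := ih hm'
    exact suc_congr g e i.isLt hi'

theorem isPos_transfer {g : TermGraph S N} {π π' : List ℕ} {m : N}
    (hm : g.IsPos π m) (hm' : g.IsPos π' m) :
    ∀ {σ : List ℕ} {x : N}, g.IsPos (π ++ σ) x → g.IsPos (π' ++ σ) x := by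
  intro σ
  induction σ using List.reverseRecOn with
  | nil =>
    intro x hx
    rw [List.append_nil] at hx
    rw [List.append_nil]
    rw [isPos_func hx hm]
    exact hm'
  | append_singleton σ i ih =>
    intro x hx
    rw [← List.append_assoc] at hx
    obtain ⟨y, hy, hi, rfl⟩ := isPos_concat hx
    rw [← List.append_assoc]
    exact (ih hy).step ⟨i, hi⟩

theorem isPos_prefix {g : TermGraph S N} {π ρ : List ℕ} {n : N}
    (h : g.IsPos π n) (hp : ρ <+: π) : ∃ m, g.IsPos ρ m := by
  obtain ⟨σ, rfl⟩ := hp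
  induction σ using List.reverseRecOn generalizing n with
  | nil => exact ⟨n, by simpa using h⟩
  | append_singleton σ i ih =>
    rw [← List.append_assoc] at h
    obtain ⟨y, hy, _, _⟩ := isPos_concat h
    exact ih hy

theorem ar_pos_of_concat {g : TermGraph S N} {π : List ℕ} {i : ℕ} {m : N}
    (h : g.IsPos (π ++ [i]) m) {n : N} (hn : g.IsPos π n) :
    i < S.ar (g.lab n) := by
  obtain ⟨m', hm', hi, _⟩ := isPos_concat h
  rwa [isPos_func hn hm']

theorem bot_lab_ne_none {g : TermGraph S.bot N} {n : N}
    (h : 0 < S.bot.ar (g.lab n)) : g.lab n ≠ none := by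
  intro e
  rw [e] at h
  exact absurd h (by simp [Signature.bot])

/- depth lemmas -/

theorem depth_le_of_isPos {g : TermGraph S N} {π : List ℕ} {n : N}
    (h : g.IsPos π n) : g.depth n ≤ π.length :=
  Nat.sInf_le ⟨π, h, rfl⟩

theorem exists_acyclic_shortest {g : TermGraph S N} {n : N}
    (h : ∃ π, g.IsPos π n) :
    ∃ π, g.IsPos π n ∧ g.IsAcyclicPos π ∧ π.length = g.depth n := by
  obtain ⟨π₀, hπ₀⟩ := h
  have hne : {k : ℕ | ∃ π : List ℕ, g.IsPos π n ∧ π.length = k}.Nonempty :=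
    ⟨π₀.length, π₀, hπ₀, rfl⟩
  obtain ⟨π, hπ, hlen⟩ := Nat.sInf_mem hne
  refine ⟨π, hπ, ?_, hlen⟩
  intro π₁ π₂ m h12 h2π hp1 hp2
  by_contra hne'
  have hlt : π₁.length < π₂.length :=
    lt_of_le_of_ne h12.length_le (fun e => hne' (List.IsPrefix.eq_of_length h12 e))
  obtain ⟨σ, rfl⟩ := h2π
  have hx : g.IsPos (π₁ ++ σ) n := isPos_transfer hp2 hp1 hπ
  have h5 := depth_le_of_isPos hx
  have hlen' : (π₂ ++ σ).length = g.depth n := hlen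
  rw [← hlen'] at h5
  simp only [List.length_append] at h5
  omega

theorem nodePosAcy_nonempty {g : TermGraph S N} {n : N} (h : ∃ π, g.IsPos π n) :
    ∃ π, π ∈ g.nodePosAcy n := by
  obtain ⟨π, h1, h2, _⟩ := exists_acyclic_shortest h
  exact ⟨π, h1, h2⟩

theorem depth_eq_of_nodePosAcy_eq {g : TermGraph S N} {h : TermGraph S M}
    {n : N} {m : M} (hg : ∃ π, g.IsPos π n)
    (he : g.nodePosAcy n = h.nodePosAcy m) : g.depth n = h.depth m := by
  obtain ⟨πg, h1, h2, h3⟩ := exists_acyclic_shortest hg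
  have hmem : πg ∈ h.nodePosAcy m := he ▸ ⟨h1, h2⟩
  have hh : ∃ π, h.IsPos π m := ⟨πg, hmem.1⟩
  obtain ⟨πh, g1, g2, g3⟩ := exists_acyclic_shortest hh
  have hmem' : πh ∈ g.nodePosAcy n := he ▸ ⟨g1, g2⟩
  have d1 : g.depth n ≤ πh.length := depth_le_of_isPos hmem'.1
  have d2 : h.depth m ≤ πg.length := depth_le_of_isPos hmem.1
  omega

theorem depth_suc_le {g : TermGraph S N} {n : N} (h : ∃ π, g.IsPos π n)
    (i : Fin (S.ar (g.lab n))) : g.depth (g.suc n i) ≤ g.depth n + 1 := by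
  obtain ⟨π, h1, _, h3⟩ := exists_acyclic_shortest h
  have := depth_le_of_isPos (h1.step i)
  simpa [h3] using this

theorem IsAcyclicPos.prefix {g : TermGraph S N} {π ρ : List ℕ}
    (h : g.IsAcyclicPos π) (hp : ρ <+: π) : g.IsAcyclicPos ρ :=
  fun π₁ π₂ m h12 h2ρ hp1 hp2 => h π₁ π₂ m h12 (h2ρ.trans hp) hp1 hp2

end TermGraph

namespace TermGraph

variable {S : Signature} {N M K : Type}

theorem IsDHom.lab_eq' {g : TermGraph S.bot N} {h : TermGraph S.bot M} {φ : N → M}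
    (hφ : IsDHom ({none} : Set (Option S.Sym)) g h φ) {n : N} (hn : g.lab n ≠ none) :
    h.lab (φ n) = g.lab n := hφ.lab_eq n (by exact hn)

theorem isPos_map {g : TermGraph S.bot N} {h : TermGraph S.bot M} {φ : N → M}
    (hφ : IsDHom ({none} : Set (Option S.Sym)) g h φ) {π : List ℕ} {n : N} (hp : g.IsPos π n) :
    h.IsPos π (φ n) := by
  induction hp with
  | root => rw [hφ.root_eq]; exact IsPos.root
  | @step π m hm i ih =>
    obtain ⟨iv, hlt⟩ := i
    have hn : g.lab m ≠ none := bot_lab_ne_none (Nat.pos_of_ne_zero (by omega))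
    have hi' : iv < S.bot.ar (h.lab (φ m)) := by rw [hφ.lab_eq' hn]; exact hlt
    have hs := hφ.suc_eq m (by exact hn) iv hlt hi'
    show h.IsPos (π ++ [iv]) (φ (g.suc m ⟨iv, hlt⟩))
    rw [hs]
    exact ih.step ⟨iv, hi'⟩

theorem IsDHom.compBot {g : TermGraph S.bot N} {h : TermGraph S.bot M}
    {k : TermGraph S.bot K} {φ : N → M} {ψ : M → K}
    (hφ : IsDHom ({none} : Set (Option S.Sym)) g h φ) (hψ : IsDHom ({none} : Set (Option S.Sym)) h k ψ) :
    IsDHom ({none} : Set (Option S.Sym)) g k (ψ ∘ φ) := by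
  refine ⟨?_, ?_, ?_⟩
  · show ψ (φ g.root) = k.root
    rw [hφ.root_eq, hψ.root_eq]
  · intro n hn
    have h1 := hφ.lab_eq n hn
    have hm : h.lab (φ n) ∉ ({none} : Set (Option S.Sym)) := by rw [h1]; exact hn
    have h2 := hψ.lab_eq (φ n) hm
    show k.lab (ψ (φ n)) = g.lab n
    rw [h2, h1]
  · intro n hn i hi hi'
    have h1 := hφ.lab_eq n hn
    have hm : h.lab (φ n) ∉ ({none} : Set (Option S.Sym)) := by rw [h1]; exact hn
    have hi2 : i < S.bot.ar (h.lab (φ n)) := by rw [h1]; exact hi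
    show ψ (φ (g.suc n ⟨i, hi⟩)) = k.suc (ψ (φ n)) ⟨i, hi'⟩
    rw [hφ.suc_eq n hn i hi hi2, hψ.suc_eq (φ n) hm i hi2 hi']

theorem IsRigidBotHom.comp {g : TermGraph S.bot N} {h : TermGraph S.bot M}
    {k : TermGraph S.bot K} {φ : N → M} {ψ : M → K}
    (hφ : IsRigidBotHom g h φ) (hψ : IsRigidBotHom h k ψ) :
    IsRigidBotHom g k (ψ ∘ φ) := by
  refine ⟨hφ.1.compBot hψ.1, ?_⟩
  intro n hn
  have h1 := hφ.1.lab_eq n hn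
  have hm : h.lab (φ n) ∉ ({none} : Set (Option S.Sym)) := by rw [h1]; exact hn
  rw [hφ.2 n hn, hψ.2 (φ n) hm]
  rfl

theorem isDHom_id {Δ : Set S.Sym} (g : TermGraph S N) : IsDHom Δ g g id :=
  ⟨rfl, fun _ _ => rfl, fun _ _ _ _ _ => rfl⟩

theorem IsDHom.compE {g : TermGraph S N} {h : TermGraph S M}
    {k : TermGraph S K} {φ : N → M} {ψ : M → K}
    (hφ : IsDHom ∅ g h φ) (hψ : IsDHom ∅ h k ψ) :
    IsDHom ∅ g k (ψ ∘ φ) := by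
  refine ⟨?_, ?_, ?_⟩
  · show ψ (φ g.root) = k.root
    rw [hφ.root_eq, hψ.root_eq]
  · intro n _
    have h1 := hφ.lab_eq n (by simp)
    have h2 := hψ.lab_eq (φ n) (by simp)
    show k.lab (ψ (φ n)) = g.lab n
    rw [h2, h1]
  · intro n _ i hi hi'
    have h1 := hφ.lab_eq n (by simp)
    have hi2 : i < S.ar (h.lab (φ n)) := by rw [h1]; exact hi
    show ψ (φ (g.suc n ⟨i, hi⟩)) = k.suc (ψ (φ n)) ⟨i, hi'⟩
    rw [hφ.suc_eq n (by simp) i hi hi2, hψ.suc_eq (φ n) (by simp) i hi2 hi']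

theorem iso_of_inverse {g : TermGraph S N} {h : TermGraph S M} {φ : N → M}
    {ψ : M → N} (hφ : IsDHom ∅ g h φ) (h1 : ∀ n, ψ (φ n) = n)
    (h2 : ∀ m, φ (ψ m) = m) : Iso g h := by
  refine ⟨φ, ψ, hφ, ⟨?_, ?_, ?_⟩, h1, h2⟩
  · rw [← hφ.root_eq, h1]
  · intro m _
    have h3 := hφ.lab_eq (ψ m) (by simp)
    rw [h2] at h3
    exact h3.symm
  · intro m _ i hi hi'
    have hinj : ∀ a b : N, φ a = φ b → a = b := fun a b e => by
      rw [← h1 a, e, h1 b]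
    apply hinj
    have hc : i < S.ar (h.lab (φ (ψ m))) := by rw [h2]; exact hi
    have hs := hφ.suc_eq (ψ m) (by simp) i hi' hc
    rw [h2 (h.suc m ⟨i, hi⟩), hs]
    exact (suc_congr h (h2 m) hc hi).symm

theorem Iso.symm {g : TermGraph S N} {h : TermGraph S M} (e : Iso g h) :
    Iso h g := by
  obtain ⟨φ, ψ, a, b, l, r⟩ := e
  exact ⟨ψ, φ, b, a, r, l⟩

theorem Iso.trans {g : TermGraph S N} {h : TermGraph S M} {k : TermGraph S K}
    (e1 : Iso g h) (e2 : Iso h k) : Iso g k := by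
  obtain ⟨φ1, ψ1, a1, b1, l1, r1⟩ := e1
  obtain ⟨φ2, ψ2, a2, b2, l2, r2⟩ := e2
  refine iso_of_inverse (a1.compE a2) (ψ := ψ1 ∘ ψ2) ?_ ?_
  · intro n
    show ψ1 (ψ2 (φ2 (φ1 n))) = n
    rw [l2, l1]
  · intro m
    show φ2 (φ1 (ψ1 (ψ2 m))) = m
    rw [r1, r2]

end TermGraph

namespace CTG

variable {S : Signature}

theorem LeR.rfl (g : CTG S.bot) : g.LeR g :=
  ⟨id, TermGraph.isDHom_id g.tg, fun _ _ => Eq.refl _⟩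

theorem LeR.trans {g h k : CTG S.bot} (h1 : g.LeR h) (h2 : h.LeR k) : g.LeR k := by
  obtain ⟨φ, hφ⟩ := h1
  obtain ⟨ψ, hψ⟩ := h2
  exact ⟨ψ ∘ φ, hφ.comp hψ⟩

end CTG

namespace TermGraph

theorem prefix_concat_cases {ρ π : List ℕ} {i : ℕ} (hp : ρ <+: π ++ [i]) :
    ρ = π ++ [i] ∨ ρ <+: π := by
  obtain ⟨t, ht⟩ := hp
  induction t using List.reverseRecOn with
  | nil => left; simpa using ht
  | append_singleton t' j _ =>
    right
    rw [← List.append_assoc] at ht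
    obtain ⟨h1, _⟩ := List.append_inj' ht rfl
    exact ⟨t', h1⟩

section TruncIso

variable {S : Signature} {N M : Type}
variable {g : TermGraph S.bot N} {h : TermGraph S.bot M} {φ : N → M} {d : ℕ}

theorem acyPred_lab_ne_none {n m : N} (hm : m ∈ g.acyPred n) :
    g.lab m ≠ none := by
  obtain ⟨π, i, hmem, hπ⟩ := hm
  have hi := ar_pos_of_concat hmem.1 hπ
  exact bot_lab_ne_none (Nat.lt_of_le_of_lt (Nat.zero_le i) hi)

theorem retained_lab_ne_none (hbot : ∀ w : N, g.lab w = none → d ≤ g.depth w)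
    {n : N} (hn : g.Retained d n) : g.lab n ≠ none := by
  induction hn with
  | shallow hdep =>
    intro e
    have := hbot _ e
    omega
  | pred _ hm _ => exact acyPred_lab_ne_none hm

theorem rigid_acy (hφ : IsRigidBotHom g h φ) {n : N} (hn : g.lab n ≠ none) :
    g.nodePosAcy n = h.nodePosAcy (φ n) :=
  hφ.2 n (by exact hn)

theorem depth_map (hφ : IsRigidBotHom g h φ) (hgr : g.Reachable)
    {n : N} (hn : g.lab n ≠ none) : h.depth (φ n) = g.depth n :=
  (depth_eq_of_nodePosAcy_eq (hgr n) (rigid_acy hφ hn)).symm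

theorem retained_map (hφ : IsRigidBotHom g h φ) (hgr : g.Reachable)
    (hbot : ∀ w : N, g.lab w = none → d ≤ g.depth w)
    {n : N} (hn : g.Retained d n) : h.Retained d (φ n) := by
  induction hn with
  | @shallow n hdep =>
    have hl : g.lab n ≠ none := retained_lab_ne_none hbot (Retained.shallow hdep)
    exact Retained.shallow (by rw [depth_map hφ hgr hl]; exact hdep)
  | @pred n m hn hm ih =>
    have hl : g.lab n ≠ none := retained_lab_ne_none hbot hn
    apply ih.pred
    obtain ⟨π, i, hmem, hπ⟩ := hm
    refine ⟨π, i, ?_, isPos_map hφ.1 hπ⟩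
    rw [← rigid_acy hφ hl]
    exact hmem

theorem trace_lift (hφ : IsRigidBotHom g h φ)
    (hbot : ∀ w : N, g.lab w = none → d ≤ g.depth w) :
    ∀ {π : List ℕ}, π.length < d → ∀ {x : M}, h.IsPos π x →
      ∃ n : N, g.IsPos π n ∧ φ n = x := by
  intro π
  induction π using List.reverseRecOn with
  | nil =>
    intro _ x hx
    rw [isPos_nil hx]
    exact ⟨g.root, IsPos.root, hφ.1.root_eq⟩
  | append_singleton π i ih =>
    intro hlen x hx
    obtain ⟨y, hy, hi, rfl⟩ := isPos_concat hx
    have hlen' : π.length < d := by simp at hlen; omega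
    obtain ⟨n, hn, rfl⟩ := ih hlen' hy
    have hnl : g.lab n ≠ none := by
      intro e
      have h1 := hbot n e
      have h2 := depth_le_of_isPos hn
      omega
    have hi2 : i < S.bot.ar (g.lab n) := by
      rw [← hφ.1.lab_eq' hnl]; exact hi
    refine ⟨g.suc n ⟨i, hi2⟩, hn.step ⟨i, hi2⟩, ?_⟩
    exact hφ.1.suc_eq n (by exact hnl) i hi2 hi

theorem retained_lift (hφ : IsRigidBotHom g h φ) (hgr : g.Reachable)
    (hhr : h.Reachable) (hbot : ∀ w : N, g.lab w = none → d ≤ g.depth w)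
    {m : M} (hm : h.Retained d m) :
    ∃ n : N, g.lab n ≠ none ∧ g.Retained d n ∧ φ n = m := by
  induction hm with
  | @shallow m hdep =>
    obtain ⟨π, hπ, _, hlen⟩ := exists_acyclic_shortest (hhr m)
    have hld : π.length < d := by rw [hlen]; exact hdep
    obtain ⟨n, hn, rfl⟩ := trace_lift hφ hbot hld hπ
    have hdn : g.depth n < d := Nat.lt_of_le_of_lt (depth_le_of_isPos hn) hld
    have hnl : g.lab n ≠ none := by
      intro e
      have := hbot n e
      omega
    exact ⟨n, hnl, Retained.shallow hdn, rfl⟩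
  | @pred m1 m2 hm1 hm2 ih =>
    obtain ⟨n, hnl, hret, rfl⟩ := ih
    obtain ⟨π, i, hmem, hπ⟩ := hm2
    rw [← rigid_acy hφ hnl] at hmem
    obtain ⟨y, hy⟩ := isPos_prefix hmem.1 ⟨[i], rfl⟩
    have hyl : g.lab y ≠ none :=
      bot_lab_ne_none (Nat.lt_of_le_of_lt (Nat.zero_le i) (ar_pos_of_concat hmem.1 hy))
    have hfy : h.IsPos π (φ y) := isPos_map hφ.1 hy
    exact ⟨y, hyl, hret.pred ⟨π, i, hmem, hy⟩, isPos_func hfy hπ⟩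

theorem phi_inj (hφ : IsRigidBotHom g h φ) (hgr : g.Reachable)
    {n n' : N} (hnl : g.lab n ≠ none) (hnl' : g.lab n' ≠ none)
    (he : φ n = φ n') : n = n' := by
  have e1 := rigid_acy hφ hnl
  rw [he, ← rigid_acy hφ hnl'] at e1
  obtain ⟨π, hπ⟩ := nodePosAcy_nonempty (hgr n)
  have hπ' : π ∈ g.nodePosAcy n' := e1 ▸ hπ
  exact isPos_func hπ.1 hπ'.1

theorem retained_iff (hφ : IsRigidBotHom g h φ) (hgr : g.Reachable)
    (hhr : h.Reachable) (hbot : ∀ w : N, g.lab w = none → d ≤ g.depth w)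
    {n : N} (hnl : g.lab n ≠ none) :
    g.Retained d n ↔ h.Retained d (φ n) := by
  constructor
  · exact retained_map hφ hgr hbot
  · intro hr
    obtain ⟨n0, h1, h2, h3⟩ := retained_lift hφ hgr hhr hbot hr
    rwa [phi_inj hφ hgr hnl h1 h3.symm]

theorem isFringe_iff' (hd : d ≠ 0) (g : TermGraph S.bot N) (p : N × ℕ) :
    g.IsFringe d p ↔ (g.Retained d p.1 ∧ ∃ hi : p.2 < S.bot.ar (g.lab p.1),
      (¬ g.Retained d (g.suc p.1 ⟨p.2, hi⟩) ∨
        (d - 1 ≤ g.depth p.1 ∧ p.1 ∉ g.acyPred (g.suc p.1 ⟨p.2, hi⟩)))) := by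
  unfold IsFringe
  rw [if_neg hd]

theorem fringe_iff (hφ : IsRigidBotHom g h φ) (hgr : g.Reachable)
    (hhr : h.Reachable) (hd : d ≠ 0)
    (hbot : ∀ w : N, g.lab w = none → d ≤ g.depth w)
    {n : N} (hn : g.Retained d n) (i : ℕ) :
    g.IsFringe d (n, i) ↔ h.IsFringe d (φ n, i) := by
  have hnl : g.lab n ≠ none := retained_lab_ne_none hbot hn
  have hlabeq : h.lab (φ n) = g.lab n := hφ.1.lab_eq' hnl
  rw [isFringe_iff' hd, isFringe_iff' hd]
  by_cases hi : i < S.bot.ar (g.lab n)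
  · have hi2 : i < S.bot.ar (h.lab (φ n)) := by rw [hlabeq]; exact hi
    set w : N := g.suc n ⟨i, hi⟩ with hwdef
    have hw : φ w = h.suc (φ n) ⟨i, hi2⟩ := hφ.1.suc_eq n (by exact hnl) i hi hi2
    have hdep : h.depth (φ n) = g.depth n := depth_map hφ hgr hnl
    have key : (¬ g.Retained d w ∨ (d - 1 ≤ g.depth n ∧ n ∉ g.acyPred w)) ↔
        (¬ h.Retained d (φ w) ∨ (d - 1 ≤ h.depth (φ n) ∧ φ n ∉ h.acyPred (φ w))) := by
      by_cases hwl : g.lab w = none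
      · have hgside : ¬ g.Retained d w := fun hc => retained_lab_ne_none hbot hc hwl
        constructor
        · intro _
          by_cases hr : h.Retained d (φ w)
          · right
            constructor
            · rw [hdep]
              have h1 := hbot w hwl
              have h2 : g.depth w ≤ g.depth n + 1 := depth_suc_le (hgr n) ⟨i, hi⟩
              omega
            · rintro ⟨π, j, hmemH, hπ⟩
              obtain ⟨u, hul, hur, huw⟩ := retained_lift hφ hgr hhr hbot hr
              have hmemG : (π ++ [j]) ∈ g.nodePosAcy u := by
                rw [rigid_acy hφ hul, huw]; exact hmemH
              obtain ⟨y, hy⟩ := isPos_prefix hmemG.1 ⟨[j], rfl⟩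
              have hyl : g.lab y ≠ none :=
                bot_lab_ne_none (Nat.lt_of_le_of_lt (Nat.zero_le j) (ar_pos_of_concat hmemG.1 hy))
              have hyn : y = n := phi_inj hφ hgr hyl hnl (isPos_func (isPos_map hφ.1 hy) hπ)
              subst hyn
              by_cases hji : j = i
              · subst hji
                have h1 : g.IsPos (π ++ [j]) w := hy.step ⟨j, hi⟩
                have : u = w := isPos_func hmemG.1 h1
                rw [this] at hul
                exact hul hwl
              · by_cases hρ : ∃ ρ, ρ <+: π ∧ h.IsPos ρ (φ w)
                · obtain ⟨ρ, hρπ, hρw⟩ := hρ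
                  have : ρ = π ++ [j] :=
                    hmemH.2 ρ (π ++ [j]) (φ w) (hρπ.trans ⟨[j], rfl⟩)
                      (List.prefix_refl _) hρw hmemH.1
                  have hlen := hρπ.length_le
                  rw [this] at hlen
                  simp at hlen
                · have hπi : h.IsPos (π ++ [i]) (φ w) := by
                    rw [hw]; exact hπ.step ⟨i, hi2⟩
                  have hacy : h.IsAcyclicPos (π ++ [i]) := by
                    intro π₁ π₂ z h12 h2c hp1 hp2
                    rcases prefix_concat_cases h2c with rfl | h2π
                    · have hz : z = φ w := isPos_func hp2 hπi
                      rcases prefix_concat_cases h12 with rfl | h1π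
                      · rfl
                      · exact absurd ⟨π₁, h1π, hz ▸ hp1⟩ hρ
                    · exact hmemH.2 π₁ π₂ z h12 (h2π.trans ⟨[j], rfl⟩) hp1 hp2
                  have hmemI : (π ++ [i]) ∈ g.nodePosAcy u := by
                    rw [rigid_acy hφ hul, huw]; exact ⟨hπi, hacy⟩
                  have h1 : g.IsPos (π ++ [i]) w := hy.step ⟨i, hi⟩
                  have : u = w := isPos_func hmemI.1 h1
                  rw [this] at hul
                  exact hul hwl
          · exact Or.inl hr
        · intro _
          exact Or.inl hgside
      · have hretw : g.Retained d w ↔ h.Retained d (φ w) := retained_iff hφ hgr hhr hbot hwl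
        have hpred : n ∈ g.acyPred w ↔ φ n ∈ h.acyPred (φ w) := by
          constructor
          · rintro ⟨π, j, hmem, hπ⟩
            refine ⟨π, j, ?_, isPos_map hφ.1 hπ⟩
            rw [← rigid_acy hφ hwl]
            exact hmem
          · rintro ⟨π, j, hmem, hπ⟩
            rw [← rigid_acy hφ hwl] at hmem
            obtain ⟨y, hy⟩ := isPos_prefix hmem.1 ⟨[j], rfl⟩
            have hyl : g.lab y ≠ none :=
              bot_lab_ne_none (Nat.lt_of_le_of_lt (Nat.zero_le j) (ar_pos_of_concat hmem.1 hy))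
            have hyn : y = n := phi_inj hφ hgr hyl hnl (isPos_func (isPos_map hφ.1 hy) hπ)
            subst hyn
            exact ⟨π, j, hmem, hy⟩
        rw [hretw, hdep, hpred]
    constructor
    · rintro ⟨_, hi', hdis⟩
      refine ⟨retained_map hφ hgr hbot hn, hi2, ?_⟩
      have : (¬ g.Retained d w ∨ (d - 1 ≤ g.depth n ∧ n ∉ g.acyPred w)) := by
        convert hdis using 4
      rw [← hw]
      exact key.mp this
    · rintro ⟨_, hi', hdis⟩
      refine ⟨hn, hi, ?_⟩
      apply key.mpr
      rw [hw]
      convert hdis using 4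
  · constructor
    · rintro ⟨_, hi', _⟩; exact absurd hi' hi
    · rintro ⟨_, hi', _⟩
      rw [hlabeq] at hi'
      exact absurd hi' hi

end TruncIso

end TermGraph

namespace TermGraph

def truncMapFun {N M : Type} (φ : N → M) : N ⊕ (N × ℕ) → M ⊕ (M × ℕ) :=
  Sum.map φ (fun p => (φ p.1, p.2))

open Classical in
noncomputable def truncPsi {S : Signature} {N M : Type} (g : TermGraph S.bot N)
    (φ : N → M) (d : ℕ) : M → N := fun m =>
  if hm : ∃ n : N, g.lab n ≠ none ∧ g.Retained d n ∧ φ n = m then hm.choose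
  else g.root

section TruncIso2

variable {S : Signature} {N M : Type}

theorem trunc_iso_of_rigid {g : TermGraph S.bot N} {h : TermGraph S.bot M}
    {φ : N → M} {d : ℕ} (hφ : IsRigidBotHom g h φ) (hgr : g.Reachable)
    (hhr : h.Reachable) (hd : d ≠ 0)
    (hbot : ∀ w : N, g.lab w = none → d ≤ g.depth w) :
    Iso (g.trunc d) (h.trunc d) := by
  classical
  have hfrg : ∀ p : N × ℕ, g.IsFringe d p → g.Retained d p.1 := fun p hp =>
    ((isFringe_iff' hd g p).mp hp).1
  have hfrh : ∀ p : M × ℕ, h.IsFringe d p → h.Retained d p.1 := fun p hp =>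
    ((isFringe_iff' hd h p).mp hp).1
  set ψ0 : M → N := truncPsi g φ d with hψ0def
  have hψ0 : ∀ m : M, h.Retained d m →
      g.lab (ψ0 m) ≠ none ∧ g.Retained d (ψ0 m) ∧ φ (ψ0 m) = m := by
    intro m hm
    have he : ∃ n : N, g.lab n ≠ none ∧ g.Retained d n ∧ φ n = m :=
      retained_lift hφ hgr hhr hbot hm
    rw [hψ0def]
    unfold truncPsi
    rw [dif_pos he]
    exact he.choose_spec
  have hψφ : ∀ n : N, g.Retained d n → ψ0 (φ n) = n := by
    intro n hn
    have h1 := hψ0 (φ n) (retained_map hφ hgr hbot hn)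
    exact phi_inj hφ hgr h1.1 (retained_lab_ne_none hbot hn) h1.2.2
  have hmemF : ∀ x : TNode g d,
      Sum.elim (h.Retained d) (h.IsFringe d) (truncMapFun φ x.1) := by
    rintro ⟨x1, hx⟩
    cases x1 with
    | inl n => exact retained_map hφ hgr hbot hx
    | inr p => exact (fringe_iff hφ hgr hhr hd hbot (hfrg p hx) p.2).mp hx
  have hmemG : ∀ x : TNode h d,
      Sum.elim (g.Retained d) (g.IsFringe d) (truncMapFun ψ0 x.1) := by
    rintro ⟨x1, hx⟩
    cases x1 with
    | inl m => exact (hψ0 m hx).2.1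
    | inr p =>
      have hm := hψ0 p.1 (hfrh p hx)
      exact (fringe_iff hφ hgr hhr hd hbot hm.2.1 p.2).mpr
        (by rw [hm.2.2]; exact hx)
  refine iso_of_inverse
    (φ := fun x => (⟨truncMapFun φ x.1, hmemF x⟩ : TNode h d))
    (ψ := fun x => (⟨truncMapFun ψ0 x.1, hmemG x⟩ : TNode g d))
    ⟨?_, ?_, ?_⟩ ?_ ?_
  · -- root
    apply Subtype.ext
    show truncMapFun φ (truncRoot g d).1 = (truncRoot h d).1
    unfold truncRoot
    simp only [hd, ↓reduceDIte]
    show Sum.inl (φ g.root) = Sum.inl h.root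
    rw [hφ.1.root_eq]
  · -- lab
    rintro ⟨x1, hx⟩ _
    cases x1 with
    | inl n =>
      show h.lab (φ n) = g.lab n
      exact hφ.1.lab_eq' (retained_lab_ne_none hbot hx)
    | inr p => rfl
  · -- suc
    rintro ⟨x1, hx⟩ _ i hi hi'
    cases x1 with
    | inr p => exact absurd hi (Nat.not_lt_zero i)
    | inl n =>
      show (⟨truncMapFun φ (truncSuc g d ⟨Sum.inl n, hx⟩ ⟨i, hi⟩).1, _⟩ : TNode h d)
        = truncSuc h d ⟨Sum.inl (φ n), _⟩ ⟨i, hi'⟩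
      by_cases hf : g.IsFringe d (n, i)
      · have hf' : h.IsFringe d (φ n, i) :=
          (fringe_iff hφ hgr hhr hd hbot hx i).mp hf
        apply Subtype.ext
        show truncMapFun φ (truncSuc g d ⟨Sum.inl n, hx⟩ ⟨i, hi⟩).1
          = (truncSuc h d ⟨Sum.inl (φ n), hmemF ⟨Sum.inl n, hx⟩⟩ ⟨i, hi'⟩).1
        simp only [truncSuc]
        simp only [hf, hf', ↓reduceDIte]
        rfl
      · have hf' : ¬ h.IsFringe d (φ n, i) := fun hc =>
          hf ((fringe_iff hφ hgr hhr hd hbot hx i).mpr hc)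
        apply Subtype.ext
        show truncMapFun φ (truncSuc g d ⟨Sum.inl n, hx⟩ ⟨i, hi⟩).1
          = (truncSuc h d ⟨Sum.inl (φ n), hmemF ⟨Sum.inl n, hx⟩⟩ ⟨i, hi'⟩).1
        simp only [truncSuc]
        simp only [hf, hf', ↓reduceDIte]
        show Sum.inl (φ (g.suc n ⟨i, _⟩)) = Sum.inl (h.suc (φ n) ⟨i, _⟩)
        exact congrArg Sum.inl (hφ.1.suc_eq n (by exact retained_lab_ne_none hbot hx) i _ _)
  · -- ψ ∘ φ = id
    rintro ⟨x1, hx⟩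
    apply Subtype.ext
    cases x1 with
    | inl n =>
      show Sum.inl (ψ0 (φ n)) = Sum.inl n
      rw [hψφ n hx]
    | inr p =>
      show Sum.inr (ψ0 (φ p.1), p.2) = Sum.inr p
      rw [hψφ p.1 (hfrg p hx)]
  · -- φ ∘ ψ = id
    rintro ⟨x1, hx⟩
    apply Subtype.ext
    cases x1 with
    | inl m =>
      show Sum.inl (φ (ψ0 m)) = Sum.inl m
      rw [(hψ0 m hx).2.2]
    | inr p =>
      show Sum.inr (φ (ψ0 p.1), p.2) = Sum.inr p
      rw [(hψ0 p.1 (hfrh p hx)).2.2]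

end TruncIso2

end TermGraph

namespace CTG

section LubConstruction

variable {S : Signature} (α : Ordinal.{0}) (inf : Ordinal.{0} → CTG S.bot)

/-- `π` and `π'` are positions of a common node in `inf β`. -/
def AliasAt (β : Ordinal.{0}) (π π' : List ℕ) : Prop :=
  ∃ n, (inf β).tg.IsPos π n ∧ (inf β).tg.IsPos π' n

def relP (π π' : List ℕ) : Prop := ∃ β, β < α ∧ AliasAt inf β π π'

def memP (π : List ℕ) : Prop := ∃ β, β < α ∧ ∃ n, (inf β).tg.IsPos π n

def GoodL (π : List ℕ) (s : S.Sym) : Prop :=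
  ∃ β, β < α ∧ ∃ n, (inf β).tg.IsPos π n ∧ (inf β).tg.lab n = some s

def clsP (π : List ℕ) : Set (List ℕ) := {π' | relP α inf π π'}

def WN : Set (Set (List ℕ)) := {C | ∃ π, memP α inf π ∧ C = clsP α inf π}

open Classical in
noncomputable def labW (C : Set (List ℕ)) : Option S.Sym :=
  if hs : ∃ s : S.Sym, ∃ π ∈ C, GoodL α inf π s then some hs.choose else none

def sucW (C : Set (List ℕ)) (i : ℕ) : Set (List ℕ) :=
  {π' | ∃ π ∈ C, relP α inf (π ++ [i]) π'}

variable (hα : α ≠ 0)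
variable (hmono : ∀ β γ, β ≤ γ → γ < α → (inf β).LeR (inf γ))

include hmono

theorem aliasAt_mono {β γ : Ordinal.{0}} (h1 : β ≤ γ) (h2 : γ < α)
    {π π' : List ℕ} (ha : AliasAt inf β π π') : AliasAt inf γ π π' := by
  obtain ⟨ψ, hψ⟩ := hmono β γ h1 h2
  obtain ⟨n, hn1, hn2⟩ := ha
  exact ⟨ψ n, TermGraph.isPos_map hψ.1 hn1, TermGraph.isPos_map hψ.1 hn2⟩

theorem good_mono {β γ : Ordinal.{0}} (h1 : β ≤ γ) (h2 : γ < α)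
    {π : List ℕ} {s : S.Sym} {n} (hn : (inf β).tg.IsPos π n)
    (hl : (inf β).tg.lab n = some s) :
    ∃ m, (inf γ).tg.IsPos π m ∧ (inf γ).tg.lab m = some s := by
  obtain ⟨ψ, hψ⟩ := hmono β γ h1 h2
  refine ⟨ψ n, TermGraph.isPos_map hψ.1 hn, ?_⟩
  rw [hψ.1.lab_eq' (by rw [hl]; exact Option.some_ne_none _)]
  exact hl

theorem relP_symm {π π' : List ℕ} (h : relP α inf π π') : relP α inf π' π := by
  obtain ⟨β, hβ, n, h1, h2⟩ := h
  exact ⟨β, hβ, n, h2, h1⟩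

theorem relP_trans {π π' π'' : List ℕ} (h1 : relP α inf π π')
    (h2 : relP α inf π' π'') : relP α inf π π'' := by
  obtain ⟨β1, hβ1, ha1⟩ := h1
  obtain ⟨β2, hβ2, ha2⟩ := h2
  have hβ : max β1 β2 < α := max_lt hβ1 hβ2
  obtain ⟨n1, hn1, hn1'⟩ := aliasAt_mono α inf hmono (le_max_left β1 β2) hβ ha1
  obtain ⟨n2, hn2, hn2'⟩ := aliasAt_mono α inf hmono (le_max_right β1 β2) hβ ha2
  have : n1 = n2 := TermGraph.isPos_func hn1' hn2
  exact ⟨max β1 β2, hβ, n1, hn1, this ▸ hn2'⟩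

theorem memP_of_relP {π π' : List ℕ} (h : relP α inf π π') :
    memP α inf π ∧ memP α inf π' := by
  obtain ⟨β, hβ, n, h1, h2⟩ := h
  exact ⟨⟨β, hβ, n, h1⟩, ⟨β, hβ, n, h2⟩⟩

theorem relP_self {π : List ℕ} (h : memP α inf π) : relP α inf π π := by
  obtain ⟨β, hβ, n, h1⟩ := h
  exact ⟨β, hβ, n, h1, h1⟩

theorem clsP_eq_of_relP {π π' : List ℕ} (h : relP α inf π π') :
    clsP α inf π = clsP α inf π' := by
  ext ρ
  constructor
  · exact fun hρ => relP_trans α inf hmono (relP_symm α inf hmono h) hρ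
  · exact fun hρ => relP_trans α inf hmono h hρ

theorem mem_clsP_self {π : List ℕ} (h : memP α inf π) : π ∈ clsP α inf π :=
  relP_self α inf hmono h

theorem good_rel {π π' : List ℕ} {s : S.Sym} (hg : GoodL α inf π s)
    (hr : relP α inf π π') : GoodL α inf π' s := by
  obtain ⟨β1, hβ1, n, hn, hl⟩ := hg
  obtain ⟨β2, hβ2, ha⟩ := hr
  have hβ : max β1 β2 < α := max_lt hβ1 hβ2
  obtain ⟨m, hm, hl'⟩ :=
    good_mono α inf hmono (le_max_left β1 β2) hβ hn hl
  obtain ⟨y, hy, hy'⟩ := aliasAt_mono α inf hmono (le_max_right β1 β2) hβ ha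
  have : m = y := TermGraph.isPos_func hm hy
  exact ⟨max β1 β2, hβ, y, hy', this ▸ hl'⟩

theorem good_unique {π π' : List ℕ} {s s' : S.Sym} (hg : GoodL α inf π s)
    (hg' : GoodL α inf π' s') (hr : relP α inf π π') : s = s' := by
  have h1 : GoodL α inf π' s := good_rel α inf hmono hg hr
  obtain ⟨β1, hβ1, n, hn, hl⟩ := h1
  obtain ⟨β2, hβ2, m, hm, hl'⟩ := hg'
  have hβ : max β1 β2 < α := max_lt hβ1 hβ2
  obtain ⟨n', hn', hln'⟩ := good_mono α inf hmono (le_max_left β1 β2) hβ hn hl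
  obtain ⟨m', hm', hlm'⟩ := good_mono α inf hmono (le_max_right β1 β2) hβ hm hl'
  have : n' = m' := TermGraph.isPos_func hn' hm'
  rw [this, hlm'] at hln'
  exact (Option.some_inj.mp hln').symm

theorem labW_eq {C : Set (List ℕ)} {π : List ℕ} {s : S.Sym}
    (hC : C = clsP α inf π) (hg : GoodL α inf π s) : labW α inf C = some s := by
  have hmem : memP α inf π := by
    obtain ⟨β, hβ, n, hn, _⟩ := hg
    exact ⟨β, hβ, n, hn⟩
  have hex : ∃ s' : S.Sym, ∃ π' ∈ C, GoodL α inf π' s' :=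
    ⟨s, π, by rw [hC]; exact mem_clsP_self α inf hmono hmem, hg⟩
  unfold labW
  rw [dif_pos hex]
  obtain ⟨π', hπ', hg'⟩ := hex.choose_spec
  have hrel : relP α inf π π' := by rw [hC] at hπ'; exact hπ'
  rw [good_unique α inf hmono hg' hg (relP_symm α inf hmono hrel)]

theorem labW_cases {C : Set (List ℕ)} :
    labW α inf C = none ∨
    ∃ s, labW α inf C = some s ∧ ∃ π ∈ C, GoodL α inf π s := by
  unfold labW
  by_cases hs : ∃ s : S.Sym, ∃ π ∈ C, GoodL α inf π s
  · rw [dif_pos hs]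
    exact Or.inr ⟨hs.choose, rfl, hs.choose_spec⟩
  · rw [dif_neg hs]
    exact Or.inl rfl

theorem memP_prefix {π ρ : List ℕ} (h : memP α inf π) (hp : ρ <+: π) :
    memP α inf ρ := by
  obtain ⟨β, hβ, n, hn⟩ := h
  obtain ⟨m, hm⟩ := TermGraph.isPos_prefix hn hp
  exact ⟨β, hβ, m, hm⟩

theorem good_of_concat {π : List ℕ} {i : ℕ} (h : memP α inf (π ++ [i])) :
    ∃ s, GoodL α inf π s ∧ i < S.ar s := by
  obtain ⟨β, hβ, n, hn⟩ := h
  obtain ⟨y, hy⟩ := TermGraph.isPos_prefix hn ⟨[i], rfl⟩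
  have hi := TermGraph.ar_pos_of_concat hn hy
  have hl : (inf β).tg.lab y ≠ none :=
    TermGraph.bot_lab_ne_none (Nat.lt_of_le_of_lt (Nat.zero_le i) hi)
  obtain ⟨s, hs⟩ := Option.ne_none_iff_exists'.mp hl
  refine ⟨s, ⟨β, hβ, y, hy, hs⟩, ?_⟩
  rw [hs] at hi
  exact hi

theorem relP_concat {π π' : List ℕ} {s : S.Sym} {i : ℕ}
    (hr : relP α inf π π') (hg : GoodL α inf π s) (hi : i < S.ar s) :
    relP α inf (π ++ [i]) (π' ++ [i]) := by
  obtain ⟨β1, hβ1, ha⟩ := hr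
  obtain ⟨β2, hβ2, n, hn, hl⟩ := hg
  have hβ : max β1 β2 < α := max_lt hβ1 hβ2
  obtain ⟨y, hy, hy'⟩ := aliasAt_mono α inf hmono (le_max_left β1 β2) hβ ha
  obtain ⟨m, hm, hlm⟩ := good_mono α inf hmono (le_max_right β1 β2) hβ hn hl
  have hym : y = m := TermGraph.isPos_func hy hm
  subst hym
  have hia : i < S.bot.ar ((inf (max β1 β2)).tg.lab y) := by rw [hlm]; exact hi
  exact ⟨max β1 β2, hβ, (inf (max β1 β2)).tg.suc y ⟨i, hia⟩,
    hy.step ⟨i, hia⟩, hy'.step ⟨i, hia⟩⟩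

theorem memP_concat {π : List ℕ} {s : S.Sym} {i : ℕ}
    (hg : GoodL α inf π s) (hi : i < S.ar s) : memP α inf (π ++ [i]) := by
  obtain ⟨β, hβ, n, hn, hl⟩ := hg
  have hia : i < S.bot.ar ((inf β).tg.lab n) := by rw [hl]; exact hi
  exact ⟨β, hβ, _, hn.step ⟨i, hia⟩⟩

theorem sucW_eq {π : List ℕ} {s : S.Sym} {i : ℕ} (hmem : memP α inf π)
    (hg : GoodL α inf π s) (hi : i < S.ar s) :
    sucW α inf (clsP α inf π) i = clsP α inf (π ++ [i]) := by
  ext π'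
  constructor
  · rintro ⟨π₁, hπ₁, hrel⟩
    exact relP_trans α inf hmono
      (relP_concat α inf hmono hπ₁ hg hi) hrel
  · intro hπ'
    exact ⟨π, mem_clsP_self α inf hmono hmem, hπ'⟩

omit hmono in
include hα in
theorem memP_nil : memP α inf [] := by
  refine ⟨0, pos_iff_ne_zero.mpr hα, (inf 0).tg.root, TermGraph.IsPos.root⟩

end LubConstruction

end CTG

namespace CTG

section LubConstruction2

variable {S : Signature} (α : Ordinal.{0}) (inf : Ordinal.{0} → CTG S.bot)
variable (hα : α ≠ 0)
variable (hmono : ∀ β γ, β ≤ γ → γ < α → (inf β).LeR (inf γ))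

noncomputable def wtg : TermGraph S.bot ↥(WN α inf) where
  lab C := labW α inf C.1
  suc C i := ⟨sucW α inf C.1 (i : ℕ), by
    rcases labW_cases α inf hmono (C := C.1) with hnone | ⟨s, hs, π', hπ', hg⟩
    · refine absurd i.isLt ?_
      show ¬ ((i : ℕ) < S.bot.ar (labW α inf C.1))
      simp only [hnone]
      exact Nat.not_lt_zero _
    · obtain ⟨π₀, hmem₀, hC⟩ := C.2
      have hrel : relP α inf π₀ π' := by rw [hC] at hπ'; exact hπ'
      have hmem' : memP α inf π' := (memP_of_relP α inf hmono hrel).2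
      have hi : (i : ℕ) < S.ar s := by
        have h1 : (i : ℕ) < S.bot.ar (labW α inf C.1) := i.isLt
        simp only [hs] at h1
        exact h1
      have he : sucW α inf C.1 (i : ℕ) = clsP α inf (π' ++ [(i : ℕ)]) := by
        simp only [hC, clsP_eq_of_relP α inf hmono hrel]
        exact sucW_eq α inf hmono hmem' hg hi
      exact ⟨π' ++ [(i : ℕ)], memP_concat α inf hmono hg hi, he⟩⟩
  root := ⟨clsP α inf [], ⟨[], memP_nil α inf hα, rfl⟩⟩

include hα hmono

theorem isPos_w : ∀ {π : List ℕ}, memP α inf π →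
    ∀ C : ↥(WN α inf), C.1 = clsP α inf π → (wtg α inf hα hmono).IsPos π C := by
  intro π
  induction π using List.reverseRecOn with
  | nil =>
    intro hm C hC
    have hCr : C = (wtg α inf hα hmono).root := Subtype.ext (by rw [hC]; rfl)
    rw [hCr]
    exact TermGraph.IsPos.root
  | append_singleton π i ih =>
    intro hm C hC
    have hπ : memP α inf π := memP_prefix α inf hmono hm ⟨[i], rfl⟩
    obtain ⟨s, hg, hi⟩ := good_of_concat α inf hmono hm
    have hstep := ih hπ ⟨clsP α inf π, ⟨π, hπ, rfl⟩⟩ rfl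
    have hlab : labW α inf (clsP α inf π) = some s := labW_eq α inf hmono rfl hg
    have hia : i < S.bot.ar ((wtg α inf hα hmono).lab ⟨clsP α inf π, ⟨π, hπ, rfl⟩⟩) := by
      show i < S.bot.ar (labW α inf (clsP α inf π))
      rw [hlab]
      exact hi
    have hres := hstep.step ⟨i, hia⟩
    have hsuc : (wtg α inf hα hmono).suc ⟨clsP α inf π, ⟨π, hπ, rfl⟩⟩ ⟨i, hia⟩ = C := by
      apply Subtype.ext
      show sucW α inf (clsP α inf π) i = C.1
      rw [sucW_eq α inf hmono hπ hg hi, hC]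
    rw [hsuc] at hres
    exact hres

theorem mem_of_isPos_w : ∀ {π : List ℕ} {C : ↥(WN α inf)},
    (wtg α inf hα hmono).IsPos π C → π ∈ C.1 := by
  intro π C h
  induction h with
  | root => exact mem_clsP_self α inf hmono (memP_nil α inf hα)
  | @step π C hC i ih =>
    show π ++ [(i : ℕ)] ∈ sucW α inf C.1 (i : ℕ)
    refine ⟨π, ih, ?_⟩
    rcases labW_cases α inf hmono (C := C.1) with hnone | ⟨s, hs, π', hπ', hg⟩
    · refine absurd i.isLt ?_
      show ¬ ((i : ℕ) < S.bot.ar ((wtg α inf hα hmono).lab C))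
      show ¬ ((i : ℕ) < S.bot.ar (labW α inf C.1))
      simp only [hnone]
      exact Nat.not_lt_zero _
    · obtain ⟨π₀, hmem₀, hCe⟩ := C.2
      have hrel : relP α inf π' π := by
        rw [hCe] at hπ' ih
        exact relP_trans α inf hmono (relP_symm α inf hmono hπ') ih
      have hgπ : GoodL α inf π s := good_rel α inf hmono hg hrel
      have hi : (i : ℕ) < S.ar s := by
        have h1 : (i : ℕ) < S.bot.ar (labW α inf C.1) := i.isLt
        simp only [hs] at h1
        exact h1
      exact relP_self α inf hmono (memP_concat α inf hmono hgπ hi)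

noncomputable def wCTG : CTG S.bot where
  nodes := WN α inf
  tg := wtg α inf hα hmono
  reach := by
    intro C
    obtain ⟨π, hm, hC⟩ := C.2
    exact ⟨π, isPos_w α inf hα hmono hm C hC⟩
  canon := by
    intro C
    ext π
    constructor
    · intro hπ
      obtain ⟨π₀, hm₀, hC⟩ := C.2
      have hrel : relP α inf π₀ π := by
        rw [hC] at hπ
        exact hπ
      have hm : memP α inf π := (memP_of_relP α inf hmono hrel).2
      exact isPos_w α inf hα hmono hm C
        (by rw [hC, clsP_eq_of_relP α inf hmono hrel])
    · exact mem_of_isPos_w α inf hα hmono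

end LubConstruction2

end CTG

namespace CTG

section LubUB

variable {S : Signature} (α : Ordinal.{0}) (inf : Ordinal.{0} → CTG S.bot)
variable (hα : α ≠ 0)
variable (hmono : ∀ β γ, β ≤ γ → γ < α → (inf β).LeR (inf γ))

include hα hmono

theorem relP_of_isPos_w_same {π₁ π₂ : List ℕ} {Z : ↥(WN α inf)}
    (h1 : (wtg α inf hα hmono).IsPos π₁ Z) (h2 : (wtg α inf hα hmono).IsPos π₂ Z) :
    relP α inf π₁ π₂ := by
  have m1 := mem_of_isPos_w α inf hα hmono h1
  have m2 := mem_of_isPos_w α inf hα hmono h2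
  obtain ⟨π₀, hm₀, hC⟩ := Z.2
  rw [hC] at m1 m2
  exact relP_trans α inf hmono (relP_symm α inf hmono m1) m2

theorem wCTG_isUB : ∀ β, β < α → (inf β).LeR (wCTG α inf hα hmono) := by
  intro β hβ
  have hch : ∀ n : ↥(inf β).nodes, ∃ π, (inf β).tg.IsPos π n := (inf β).reach
  have hmemp : ∀ n : ↥(inf β).nodes, memP α inf (hch n).choose :=
    fun n => ⟨β, hβ, n, (hch n).choose_spec⟩
  refine ⟨fun n => ⟨clsP α inf (hch n).choose, ⟨(hch n).choose, hmemp n, rfl⟩⟩,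
    ⟨?_, ?_, ?_⟩, ?_⟩
  · -- root
    apply Subtype.ext
    show clsP α inf (hch (inf β).tg.root).choose = clsP α inf []
    exact clsP_eq_of_relP α inf hmono
      (relP_symm α inf hmono
        ⟨β, hβ, (inf β).tg.root, TermGraph.IsPos.root, (hch _).choose_spec⟩)
  · -- lab
    intro n hn
    have hn' : (inf β).tg.lab n ≠ none := by exact hn
    obtain ⟨s, hs⟩ := Option.ne_none_iff_exists'.mp hn'
    show labW α inf (clsP α inf (hch n).choose) = (inf β).tg.lab n
    rw [labW_eq α inf hmono rfl ⟨β, hβ, n, (hch n).choose_spec, hs⟩, hs]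
  · -- suc
    intro n hn i hi hi'
    have hn' : (inf β).tg.lab n ≠ none := by exact hn
    obtain ⟨s, hs⟩ := Option.ne_none_iff_exists'.mp hn'
    have hgood : GoodL α inf (hch n).choose s := ⟨β, hβ, n, (hch n).choose_spec, hs⟩
    have his : i < S.ar s := by rw [hs] at hi; exact hi
    apply Subtype.ext
    show clsP α inf (hch ((inf β).tg.suc n ⟨i, hi⟩)).choose
      = sucW α inf (clsP α inf (hch n).choose) i
    rw [sucW_eq α inf hmono (hmemp n) hgood his]
    refine clsP_eq_of_relP α inf hmono (relP_symm α inf hmono ?_)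
    exact ⟨β, hβ, (inf β).tg.suc n ⟨i, hi⟩, ((hch n).choose_spec).step ⟨i, hi⟩,
      (hch _).choose_spec⟩
  · -- rigidity
    intro n hn
    have hn' : (inf β).tg.lab n ≠ none := by exact hn
    ext π
    constructor
    · rintro ⟨hpos, hacy⟩
      have hrelπ : relP α inf (hch n).choose π :=
        ⟨β, hβ, n, (hch n).choose_spec, hpos⟩
      refine ⟨?_, ?_⟩
      · exact isPos_w α inf hα hmono (memP_of_relP α inf hmono hrelπ).2 _
          (clsP_eq_of_relP α inf hmono hrelπ)
      · intro π₁ π₂ Z h12 h2π hp1 hp2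
        have hrel := relP_of_isPos_w_same α inf hα hmono hp1 hp2
        obtain ⟨β₁, hβ₁, hal⟩ := hrel
        have hγ : max β β₁ < α := max_lt hβ hβ₁
        obtain ⟨ψ, hψ⟩ := hmono β (max β β₁) (le_max_left β β₁) hγ
        have hpa : π ∈ (inf (max β β₁)).tg.nodePosAcy (ψ n) := by
          rw [← hψ.2 n hn]
          exact ⟨hpos, hacy⟩
        obtain ⟨y, hy1, hy2⟩ := aliasAt_mono α inf hmono (le_max_right β β₁) hγ hal
        exact hpa.2 π₁ π₂ y h12 h2π hy1 hy2
    · rintro ⟨hpos, hacy⟩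
      have hmem : π ∈ clsP α inf (hch n).choose := mem_of_isPos_w α inf hα hmono hpos
      obtain ⟨β₁, hβ₁, hal⟩ := hmem
      have hγ : max β β₁ < α := max_lt hβ hβ₁
      obtain ⟨ψ, hψ⟩ := hmono β (max β β₁) (le_max_left β β₁) hγ
      obtain ⟨y, hy1, hy2⟩ := aliasAt_mono α inf hmono (le_max_right β β₁) hγ hal
      have hyψ : y = ψ n :=
        TermGraph.isPos_func hy1 (TermGraph.isPos_map hψ.1 (hch n).choose_spec)
      subst hyψ
      have hacyγ : (inf (max β β₁)).tg.IsAcyclicPos π := by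
        intro π₁ π₂ m h12 h2π hp1 hp2
        have hrel12 : relP α inf π₁ π₂ := ⟨max β β₁, hγ, m, hp1, hp2⟩
        have hm1 : memP α inf π₁ := ⟨max β β₁, hγ, m, hp1⟩
        have hz1 : (wtg α inf hα hmono).IsPos π₁
            ⟨clsP α inf π₁, ⟨π₁, hm1, rfl⟩⟩ :=
          isPos_w α inf hα hmono hm1 _ rfl
        have hz2 : (wtg α inf hα hmono).IsPos π₂
            ⟨clsP α inf π₁, ⟨π₁, hm1, rfl⟩⟩ :=
          isPos_w α inf hα hmono (memP_of_relP α inf hmono hrel12).2 _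
            (clsP_eq_of_relP α inf hmono hrel12)
        exact hacy π₁ π₂ _ h12 h2π hz1 hz2
      have : π ∈ (inf (max β β₁)).tg.nodePosAcy (ψ n) := ⟨hy2, hacyγ⟩
      rw [← hψ.2 n hn] at this
      exact this

end LubUB

end CTG

namespace TermGraph

variable {S : Signature} {N : Type}

theorem isPos_nodeAt {g : TermGraph S N} {π : List ℕ} (h : ∃ n, g.IsPos π n) :
    g.IsPos π (g.nodeAt π) := by
  unfold nodeAt
  rw [dif_pos h]
  exact h.choose_spec

theorem finite_pos_of_bounded (g : TermGraph S N) :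
    ∀ k : ℕ, {π : List ℕ | (∃ n, g.IsPos π n) ∧ π.length ≤ k}.Finite := by
  intro k
  induction k with
  | zero =>
    apply Set.Finite.subset (Set.finite_singleton ([] : List ℕ))
    rintro π ⟨_, hlen⟩
    simpa using List.length_eq_zero_iff.mp (Nat.le_zero.mp hlen)
  | succ k ih =>
    apply Set.Finite.subset
      (ih.union (Set.Finite.biUnion ih (fun ρ _ =>
        ((Set.finite_Iio (S.ar (g.labAt ρ))).image (fun i => ρ ++ [i])))))
    rintro π ⟨⟨n, hn⟩, hlen⟩
    by_cases hk : π.length ≤ k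
    · left; exact ⟨⟨n, hn⟩, hk⟩
    · right
      have hne : π ≠ [] := by
        intro e
        subst e
        simp at hk
      obtain ⟨ρ, i, rfl⟩ : ∃ ρ i, π = ρ ++ [i] :=
        ⟨π.dropLast, π.getLast hne, (List.dropLast_append_getLast hne).symm⟩
      obtain ⟨m, hm⟩ := isPos_prefix hn ⟨[i], rfl⟩
      have hρlen : ρ.length ≤ k := by
        simp only [List.length_append, List.length_singleton] at hlen
        omega
      refine Set.mem_biUnion (⟨⟨m, hm⟩, hρlen⟩ :
        ρ ∈ {π : List ℕ | (∃ n, g.IsPos π n) ∧ π.length ≤ k}) ?_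
      exact ⟨i, ar_pos_of_concat hn (isPos_nodeAt ⟨m, hm⟩), rfl⟩

end TermGraph

namespace CTG

section EvGood

variable {S : Signature} (α : Ordinal.{0}) (inf : Ordinal.{0} → CTG S.bot)
variable (hα : α ≠ 0)
variable (hmono : ∀ β γ, β ≤ γ → γ < α → (inf β).LeR (inf γ))

include hα hmono

theorem eventually_good (L : CTG S.bot) (hT : L.Total)
    (hleast : L.LeR (wCTG α inf hα hmono))
    (hub : ∀ β, β < α → (inf β).LeR L) :
    ∀ π : List ℕ, memP α inf π → ∃ s, GoodL α inf π s := by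
  intro π hπ
  obtain ⟨β, hβ, n, hn⟩ := hπ
  obtain ⟨χ, hχ⟩ := hub β hβ
  have hmL : L.tg.IsPos π (χ n) := TermGraph.isPos_map hχ.1 hn
  obtain ⟨ψ, hψ⟩ := hleast
  have hmW : (wtg α inf hα hmono).IsPos π (ψ (χ n)) := TermGraph.isPos_map hψ.1 hmL
  have hlabW : (wtg α inf hα hmono).lab (ψ (χ n)) = L.tg.lab (χ n) :=
    hψ.1.lab_eq' (hT (χ n))
  have hmem : π ∈ (ψ (χ n)).1 := mem_of_isPos_w α inf hα hmono hmW
  rcases labW_cases α inf hmono (C := (ψ (χ n)).1) with hnone | ⟨s, _, π', hπ', hg⟩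
  · exfalso
    apply hT (χ n)
    rw [← hlabW]
    exact hnone
  · obtain ⟨π₀, hm₀, hC⟩ := (ψ (χ n)).2
    rw [hC] at hmem hπ'
    exact ⟨s, good_rel α inf hmono hg
      (relP_trans α inf hmono (relP_symm α inf hmono hπ') hmem)⟩

end EvGood

end CTG

namespace CTG

section Stage

variable {S : Signature} (α : Ordinal.{0}) (inf : Ordinal.{0} → CTG S.bot)

open Classical in
noncomputable def stageOf (π : List ℕ) : Ordinal.{0} :=
  if h : ∃ β, β < α ∧ ∃ n : ↥(inf β).nodes,
      (inf β).tg.IsPos π n ∧ (inf β).tg.lab n ≠ none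
  then h.choose else 0

variable (hα : α ≠ 0)
variable (hmono : ∀ β γ, β ≤ γ → γ < α → (inf β).LeR (inf γ))

include hα in
theorem stageOf_lt (π : List ℕ) : stageOf α inf π < α := by
  unfold stageOf
  split_ifs with h
  · exact h.choose_spec.1
  · exact pos_iff_ne_zero.mpr hα

theorem stageOf_spec {π : List ℕ}
    (h : ∃ β, β < α ∧ ∃ n : ↥(inf β).nodes,
      (inf β).tg.IsPos π n ∧ (inf β).tg.lab n ≠ none) :
    ∃ n : ↥(inf (stageOf α inf π)).nodes,
      (inf (stageOf α inf π)).tg.IsPos π n ∧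
        (inf (stageOf α inf π)).tg.lab n ≠ none := by
  unfold stageOf
  rw [dif_pos h]
  exact h.choose_spec.2

include hα hmono

theorem exists_stage (L : CTG S.bot) (hT : L.Total)
    (hleast : L.LeR (wCTG α inf hα hmono))
    (hub : ∀ β, β < α → (inf β).LeR L) (k : ℕ) :
    ∃ β, β < α ∧ ∀ w : ↥(inf β).nodes,
      (inf β).tg.lab w = none → k ≤ (inf β).tg.depth w := by
  classical
  have hQfin : {π : List ℕ | memP α inf π ∧ π.length ≤ k}.Finite := by
    apply Set.Finite.subset (TermGraph.finite_pos_of_bounded (wtg α inf hα hmono) k)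
    rintro π ⟨hm, hlen⟩
    exact ⟨⟨⟨clsP α inf π, ⟨π, hm, rfl⟩⟩,
      isPos_w α inf hα hmono hm _ rfl⟩, hlen⟩
  refine ⟨hQfin.toFinset.sup (stageOf α inf), ?_, ?_⟩
  · rw [Finset.sup_lt_iff (by
      rw [Ordinal.bot_eq_zero]
      exact pos_iff_ne_zero.mpr hα)]
    intro π _
    exact stageOf_lt α inf hα π
  · set β0 := hQfin.toFinset.sup (stageOf α inf) with hβ0def
    have hβ0 : β0 < α := by
      rw [hβ0def, Finset.sup_lt_iff (by
        rw [Ordinal.bot_eq_zero]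
        exact pos_iff_ne_zero.mpr hα)]
      intro π _
      exact stageOf_lt α inf hα π
    intro w hw
    by_contra hlt
    push_neg at hlt
    obtain ⟨π, hπ, _, hlen⟩ := TermGraph.exists_acyclic_shortest ((inf β0).reach w)
    have hmemπ : memP α inf π := ⟨β0, hβ0, w, hπ⟩
    have hQ : π ∈ {π : List ℕ | memP α inf π ∧ π.length ≤ k} :=
      ⟨hmemπ, by omega⟩
    obtain ⟨s, hg⟩ := eventually_good α inf hα hmono L hT hleast hub π hmemπ
    have hex : ∃ β, β < α ∧ ∃ n : ↥(inf β).nodes,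
        (inf β).tg.IsPos π n ∧ (inf β).tg.lab n ≠ none := by
      obtain ⟨β1, hβ1, y, hy, hl⟩ := hg
      exact ⟨β1, hβ1, y, hy, by rw [hl]; exact Option.some_ne_none _⟩
    obtain ⟨y, hy, hyl⟩ := stageOf_spec α inf hex
    have hle : stageOf α inf π ≤ β0 := Finset.le_sup (hQfin.mem_toFinset.mpr hQ)
    obtain ⟨ψ, hψ⟩ := hmono (stageOf α inf π) β0 hle hβ0
    have hψy : (inf β0).tg.IsPos π (ψ y) := TermGraph.isPos_map hψ.1 hy
    have hwy : w = ψ y := TermGraph.isPos_func hπ hψy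
    apply hyl
    rw [← hψ.1.lab_eq' hyl, ← hwy]
    exact hw

end Stage

end CTG

/-- If the limit inferior (in the rigid partial order `≤⊥r`) of
a non-empty ordinal-indexed sequence of total canonical term graphs is itself
total, then the sequence converges w.r.t. the rigid distance `d†` and the limit
inferior is its limit. -/
theorem total_liminf_is_limit (S : Signature) (α : Ordinal.{0}) (hα : α ≠ 0)
    (f : Ordinal.{0} → CTG S.bot) (hf : ∀ ι < α, (f ι).Total)
    (L : CTG S.bot) (hL : CTG.IsLiminfR α f L) (hT : L.Total) :
    CTG.OrdTendsto α f L := by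
  classical
  obtain ⟨inf, hinf, hlub⟩ := hL
  have hmono : ∀ β γ, β ≤ γ → γ < α → (inf β).LeR (inf γ) := by
    intro β γ hβγ hγ
    have hβ : β < α := lt_of_le_of_lt hβγ hγ
    refine (hinf γ hγ).2 (inf β) ?_
    rintro g ⟨ι, hι1, hι2, rfl⟩
    exact (hinf β hβ).1 (f ι) ⟨ι, le_trans hβγ hι1, hι2, rfl⟩
  have hub : ∀ β, β < α → (inf β).LeR L := fun β hβ => hlub.1 (inf β) ⟨β, hβ, rfl⟩
  have hleast : L.LeR (CTG.wCTG α inf hα hmono) := by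
    refine hlub.2 _ ?_
    rintro g ⟨β, hβ, rfl⟩
    exact CTG.wCTG_isUB α inf hα hmono β hβ
  intro ε hε
  obtain ⟨k0, hk0⟩ := exists_pow_lt_of_lt_one hε (by norm_num : (1/2 : ℝ) < 1)
  have hkpow : (1/2 : ℝ) ^ (max k0 1) < ε :=
    lt_of_le_of_lt
      (pow_le_pow_of_le_one (by norm_num) (by norm_num) (le_max_left k0 1)) hk0
  obtain ⟨β0, hβ0, hbot⟩ :=
    CTG.exists_stage α inf hα hmono L hT hleast hub (max k0 1)
  refine ⟨β0, hβ0, ?_⟩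
  intro ι hι1 hι2
  obtain ⟨φ1, hφ1⟩ := (hinf β0 hβ0).1 (f ι) ⟨ι, le_of_lt hι1, hι2, rfl⟩
  obtain ⟨φ2, hφ2⟩ := hub β0 hβ0
  have hk0' : max k0 1 ≠ 0 := by omega
  have iso1 := TermGraph.trunc_iso_of_rigid hφ1 (inf β0).reach (f ι).reach hk0' hbot
  have iso2 := TermGraph.trunc_iso_of_rigid hφ2 (inf β0).reach L.reach hk0' hbot
  have isoT : TermGraph.Iso ((f ι).tg.trunc (max k0 1)) (L.tg.trunc (max k0 1)) :=
    iso1.symm.trans iso2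
  have hmemT : ((max k0 1 : ℕ) : ℕ∞) ∈ {d : ℕ∞ | CTG.TruncIso (f ι).tg L.tg d} := by
    constructor
    · intro hc
      exact absurd hc (by simp)
    · intro k' hk'
      have hkk : k' = max k0 1 := by exact_mod_cast hk'.symm
      subst hkk
      exact isoT
  have hsim : ((max k0 1 : ℕ) : ℕ∞) ≤ CTG.simr (f ι) L := le_sSup hmemT
  show CTG.rdist (f ι) L < ε
  unfold CTG.rdist
  split_ifs with htop
  · exact hε
  · have hco := ENat.coe_toNat htop
    have hkm : max k0 1 ≤ (CTG.simr (f ι) L).toNat := by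
      rw [← hco] at hsim
      exact_mod_cast hsim
    calc (1/2 : ℝ) ^ (CTG.simr (f ι) L).toNat ≤ (1/2 : ℝ) ^ (max k0 1) :=
          pow_le_pow_of_le_one (by norm_num) (by norm_num) hkm
      _ < ε := hkpow

end TGR
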